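/- For an irreducible symmetric random walk on a countable group G generated by a symmetric probability measure, the limit of P_0(X_{2n} = 0)^{1/(2n)} as n → ∞ exists and equals the spectral radius of the transition operator on ℓ²(G). -/

import Mathlib

open Filter Topology

section KestenAux

variable {G : Type*} [Group G] [DecidableEq G]

/-- Fubini for nonnegative double sums. -/
lemma tsum_swap_nonneg {α β : Type*} {f : α → β → ℝ}
    (h0 : ∀ a b, 0 ≤ f a b) (h1 : ∀ a, Summable (f a))
    (h2 : Summable fun a => ∑' b, f a b) :
    ∑' b, ∑' a, f a b = ∑' a, ∑' b, f a b := by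
  have hs : Summable (Function.uncurry f) :=
    (summable_prod_of_nonneg (fun p => h0 p.1 p.2)).2 ⟨h1, h2⟩
  exact Summable.tsum_comm' hs h1 (fun c => hs.prod_symm.prod_factor c)

variable (μ : G → ℝ) (ν : ℕ → G → ℝ)
variable (hnonneg : ∀ g, 0 ≤ μ g) (hsum : ∑' g, μ g = 1) (hsym : ∀ g, μ g⁻¹ = μ g)
variable (hν0 : ∀ g : G, ν 0 g = if g = 1 then 1 else 0)
variable (hν : ∀ n (g : G), ν (n + 1) g = ∑' h : G, ν n h * μ (h⁻¹ * g))

section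
include hsum

lemma mu_summable : Summable μ := by
  by_contra h
  rw [tsum_eq_zero_of_not_summable h] at hsum
  norm_num at hsum

include hnonneg
lemma mu_le_one (g : G) : μ g ≤ 1 := by
  rw [← hsum]
  exact Summable.le_tsum (mu_summable μ hsum) g (fun h _ => hnonneg h)

end

section
include hnonneg hν0 hν

lemma nu_nonneg : ∀ n g, 0 ≤ ν n g := by
  intro n
  induction n with
  | zero => intro g; rw [hν0]; positivity
  | succ n ih =>
    intro g
    rw [hν]
    exact tsum_nonneg fun h => mul_nonneg (ih h) (hnonneg _)

include hsum

lemma nu_hasSum_one : ∀ n, HasSum (ν n) 1 := by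
  intro n
  induction n with
  | zero =>
    have : (fun g : G => if g = 1 then (1:ℝ) else 0) = ν 0 := by
      funext g; rw [hν0]
    exact this ▸ hasSum_ite_eq (1 : G) (1 : ℝ)
  | succ n ih =>
    have hμs : Summable μ := mu_summable μ hsum
    have hnn := nu_nonneg μ ν hnonneg hν0 hν
    set F : G × G → ℝ := fun p => ν n p.1 * μ (p.1⁻¹ * p.2) with hF
    have hF0 : ∀ p : G × G, 0 ≤ F p := fun p => mul_nonneg (hnn n p.1) (hnonneg _)
    have h1 : ∀ h : G, Summable fun g => F (h, g) := by
      intro h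
      show Summable fun g : G => ν n h * μ (h⁻¹ * g)
      exact Summable.mul_left _ (((Equiv.mulLeft h⁻¹).summable_iff (f := μ)).mpr hμs)
    have hinner : ∀ h : G, ∑' g, F (h, g) = ν n h := by
      intro h
      have : ∑' g : G, μ (h⁻¹ * g) = 1 := by
        have e := (Equiv.mulLeft h⁻¹).tsum_eq μ
        simp only [Equiv.coe_mulLeft] at e
        rw [e, hsum]
      rw [hF]
      simp only [tsum_mul_left, this, mul_one]
    have h2 : Summable fun h => ∑' g, F (h, g) := by
      simpa only [hinner] using ih.summable
    have hFs : Summable F := by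
      refine (summable_prod_of_nonneg hF0).2 ⟨h1, h2⟩
    have hswap : ∑' g, ∑' h, F (h, g) = ∑' h, ∑' g, F (h, g) :=
      tsum_swap_nonneg (fun a b => hF0 (a, b)) h1 h2
    have hsum2 : ∑' g, ν (n+1) g = 1 := by
      have : ∀ g, ν (n+1) g = ∑' h, F (h, g) := fun g => hν n g
      rw [tsum_congr this, hswap, tsum_congr hinner, ih.tsum_eq]
    have hsummable2 : Summable (ν (n+1)) := by
      have : Summable fun g => ∑' h, F (h, g) := hFs.prod_symm.prod
      exact this.congr fun g => (hν n g).symm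
    rw [← hsum2]
    exact hsummable2.hasSum

lemma nu_summable (n : ℕ) : Summable (ν n) := (nu_hasSum_one μ ν hnonneg hsum hν0 hν n).summable

lemma nu_le_one (n : ℕ) (g : G) : ν n g ≤ 1 := by
  conv_rhs => rw [← (nu_hasSum_one μ ν hnonneg hsum hν0 hν n).tsum_eq]
  exact Summable.le_tsum (nu_summable μ ν hnonneg hsum hν0 hν n) g
    (fun h _ => nu_nonneg μ ν hnonneg hν0 hν n h)

lemma nu_shift_summable (n : ℕ) (x : G) : Summable fun g => ν n (x * g) :=
  (nu_summable μ ν hnonneg hsum hν0 hν n).comp_injective (Equiv.mulLeft x).injective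

lemma nu_mul_summable (a b : ℕ) (x y : G) :
    Summable fun g => ν a (x * g) * ν b (y * g) := by
  refine Summable.of_nonneg_of_le
    (fun g => mul_nonneg (nu_nonneg μ ν hnonneg hν0 hν a _) (nu_nonneg μ ν hnonneg hν0 hν b _))
    (fun g => ?_) (nu_shift_summable μ ν hnonneg hsum hν0 hν a x)
  calc ν a (x * g) * ν b (y * g) ≤ ν a (x * g) * 1 :=
        mul_le_mul_of_nonneg_left (nu_le_one μ ν hnonneg hsum hν0 hν b _)
          (nu_nonneg μ ν hnonneg hν0 hν a _)
    _ = ν a (x * g) := mul_one _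

lemma nu_conv (a : ℕ) : ∀ b (g : G), ν (a + b) g = ∑' h, ν a h * ν b (h⁻¹ * g) := by
  intro b
  induction b with
  | zero =>
    intro g
    rw [Nat.add_zero, tsum_eq_single g ?_]
    · rw [inv_mul_cancel, hν0, if_pos rfl, mul_one]
    · intro h hne
      rw [hν0, if_neg (fun hh => hne (inv_mul_eq_one.mp hh)), mul_zero]
  | succ b ih =>
    intro g
    have hnn := nu_nonneg μ ν hnonneg hν0 hν
    set F : G → G → ℝ := fun h k => ν a k * (ν b (k⁻¹ * h) * μ (h⁻¹ * g)) with hFdef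
    have h0 : ∀ h k, 0 ≤ F h k := fun h k =>
      mul_nonneg (hnn a k) (mul_nonneg (hnn b _) (hnonneg _))
    -- for fixed k, sum over h
    have hk_inner : ∀ k : G, ∑' h, F h k = ν a k * ν (b+1) (k⁻¹ * g) := by
      intro k
      rw [tsum_mul_left]
      congr 1
      have e := (Equiv.mulLeft k).tsum_eq (fun h => ν b (k⁻¹ * h) * μ (h⁻¹ * g))
      simp only [Equiv.coe_mulLeft] at e
      rw [← e, hν b (k⁻¹ * g)]
      apply tsum_congr
      intro y
      rw [inv_mul_cancel_left, mul_inv_rev, mul_assoc]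
    have hk_summ : ∀ k : G, Summable fun h => F h k := by
      intro k
      apply Summable.mul_left
      refine Summable.of_nonneg_of_le (fun h => mul_nonneg (hnn b _) (hnonneg _)) (fun h => ?_)
        (nu_shift_summable μ ν hnonneg hsum hν0 hν b k⁻¹)
      calc ν b (k⁻¹ * h) * μ (h⁻¹ * g) ≤ ν b (k⁻¹ * h) * 1 :=
            mul_le_mul_of_nonneg_left (mu_le_one μ hnonneg hsum _) (hnn b _)
        _ = ν b (k⁻¹ * h) := mul_one _
    have hsum_out : Summable fun k => ∑' h, F h k := by
      simp only [hk_inner]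
      refine Summable.of_nonneg_of_le
        (fun k => mul_nonneg (hnn a k) (hnn (b+1) _)) (fun k => ?_)
        (nu_summable μ ν hnonneg hsum hν0 hν a)
      calc ν a k * ν (b+1) (k⁻¹ * g) ≤ ν a k * 1 :=
            mul_le_mul_of_nonneg_left (nu_le_one μ ν hnonneg hsum hν0 hν (b+1) _) (hnn a k)
        _ = ν a k := mul_one _
    -- for fixed h, sum over k  (use the swap)
    have hswap : ∑' h, ∑' k, F h k = ∑' k, ∑' h, F h k :=
      tsum_swap_nonneg (f := fun k h => F h k) (fun k h => h0 h k) hk_summ hsum_out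
    have hh_inner : ∀ h : G, ∑' k, F h k = ν (a + b) h * μ (h⁻¹ * g) := by
      intro h
      rw [hFdef]
      simp only [← mul_assoc]
      rw [tsum_mul_right]
      congr 1
      exact (ih h).symm
    calc ν (a + (b+1)) g = ν ((a+b) + 1) g := by ring_nf
      _ = ∑' h, ν (a+b) h * μ (h⁻¹ * g) := hν _ _
      _ = ∑' h, ∑' k, F h k := by exact tsum_congr fun h => (hh_inner h).symm
      _ = ∑' k, ∑' h, F h k := hswap
      _ = ∑' k, ν a k * ν (b+1) (k⁻¹ * g) := tsum_congr hk_inner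

end

end KestenAux
section KestenAux2

variable {G : Type*} [Group G] [DecidableEq G]
variable (μ : G → ℝ) (ν : ℕ → G → ℝ)
variable (hnonneg : ∀ g, 0 ≤ μ g) (hsum : ∑' g, μ g = 1) (hsym : ∀ g, μ g⁻¹ = μ g)
variable (hν0 : ∀ g : G, ν 0 g = if g = 1 then 1 else 0)
variable (hν : ∀ n (g : G), ν (n + 1) g = ∑' h : G, ν n h * μ (h⁻¹ * g))

include hnonneg hsum hν0 hν

lemma nu_one_eq_mu (g : G) : ν 1 g = μ g := by
  rw [hν 0 g, tsum_eq_single (1 : G) ?_]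
  · rw [hν0, if_pos rfl, one_mul, inv_one, one_mul]
  · intro h hne
    rw [hν0, if_neg hne, zero_mul]

include hsym

lemma nu_symm : ∀ n (g : G), ν n g⁻¹ = ν n g := by
  intro n
  induction n with
  | zero =>
    intro g
    rw [hν0, hν0]
    simp [inv_eq_one]
  | succ n ih =>
    intro g
    have e1 : ν (n+1) g⁻¹ = ∑' k, μ k * ν n (k⁻¹ * g) := by
      rw [hν n g⁻¹]
      have e := (Equiv.mulLeft g⁻¹).tsum_eq (fun h => ν n h * μ (h⁻¹ * g⁻¹))
      simp only [Equiv.coe_mulLeft] at e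
      rw [← e]
      apply tsum_congr
      intro k
      have h1 : (g⁻¹ * k)⁻¹ * g⁻¹ = (g * (g⁻¹ * k))⁻¹ := by group
      rw [h1, hsym, mul_inv_cancel_left, mul_comm]
      congr 1
      rw [← ih (g⁻¹ * k)]
      congr 1
      group
    have e2 : ν (n+1) g = ∑' k, μ k * ν n (k⁻¹ * g) := by
      have := nu_conv μ ν hnonneg hsum hν0 hν 1 n g
      rw [show (1 + n) = n + 1 from by ring] at this
      rw [this]
      apply tsum_congr
      intro k
      rw [nu_one_eq_mu μ ν hnonneg hsum hν0 hν k]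
    rw [e1, e2]

lemma nu_cross (a b : ℕ) (x y : G) :
    ∑' g, ν a (x⁻¹ * g) * ν b (y⁻¹ * g) = ν (a + b) (x⁻¹ * y) := by
  have e := (Equiv.mulLeft x).tsum_eq (fun g => ν a (x⁻¹ * g) * ν b (y⁻¹ * g))
  simp only [Equiv.coe_mulLeft] at e
  rw [← e]
  rw [nu_conv μ ν hnonneg hsum hν0 hν a b (x⁻¹ * y)]
  apply tsum_congr
  intro t
  rw [inv_mul_cancel_left]
  congr 1
  rw [← nu_symm μ ν hnonneg hsum hsym hν0 hν b (t⁻¹ * (x⁻¹ * y))]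
  congr 1
  group

lemma nu_self_cross (n : ℕ) (x : G) :
    ∑' g, ν n (x⁻¹ * g) * ν n (x⁻¹ * g) = ν (n + n) 1 := by
  have := nu_cross μ ν hnonneg hsum hsym hν0 hν n n x x
  rwa [inv_mul_cancel] at this

/-- Cauchy–Schwarz: the return probability dominates all two-step transition probabilities. -/
lemma nu_apply_le (n : ℕ) (x : G) : ν (n + n) x ≤ ν (n + n) 1 := by
  have hnn := nu_nonneg μ ν hnonneg hν0 hν
  have hrepr : ν (n + n) x = ∑' g, ν n g * ν n (x⁻¹ * g) := by
    have := nu_cross μ ν hnonneg hsum hsym hν0 hν n n 1 x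
    simp only [inv_one, one_mul] at this
    rw [← this]
  rw [hrepr]
  have hc : ν (n + n) 1 = ∑' g, ν n g * ν n g := by
    have := nu_self_cross μ ν hnonneg hsum hsym hν0 hν n 1
    simp only [inv_one, one_mul] at this
    rw [← this]
  have hcx : ∑' g, ν n (x⁻¹ * g) * ν n (x⁻¹ * g) = ν (n + n) 1 :=
    nu_self_cross μ ν hnonneg hsum hsym hν0 hν n x
  have hsq : Summable fun g => ν n g * ν n g := by
    have := nu_mul_summable μ ν hnonneg hsum hν0 hν n n 1 1
    simpa using this
  have hsqx : Summable fun g => ν n (x⁻¹ * g) * ν n (x⁻¹ * g) := by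
    have := nu_mul_summable μ ν hnonneg hsum hν0 hν n n x⁻¹ x⁻¹
    simpa using this
  have hmix : Summable fun g => ν n g * ν n (x⁻¹ * g) := by
    have := nu_mul_summable μ ν hnonneg hsum hν0 hν n n 1 x⁻¹
    simpa using this
  have hone_nn : 0 ≤ ν (n + n) 1 := hnn _ _
  refine Summable.tsum_le_of_sum_le hmix ?_
  intro s
  have CS := Finset.sum_mul_sq_le_sq_mul_sq s (fun g => ν n g) (fun g => ν n (x⁻¹ * g))
  have h1 : ∑ g ∈ s, ν n g ^ 2 ≤ ν (n + n) 1 := by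
    rw [hc]
    refine le_trans ?_ (Summable.sum_le_tsum s (fun g _ => mul_nonneg (hnn n g) (hnn n g)) hsq)
    exact le_of_eq (Finset.sum_congr rfl fun g _ => by ring)
  have h2 : ∑ g ∈ s, ν n (x⁻¹ * g) ^ 2 ≤ ν (n + n) 1 := by
    rw [← hcx]
    refine le_trans ?_ (Summable.sum_le_tsum s (fun g _ => mul_nonneg (hnn n _) (hnn n _)) hsqx)
    exact le_of_eq (Finset.sum_congr rfl fun g _ => by ring)
  have hsum_nn : 0 ≤ ∑ g ∈ s, ν n g * ν n (x⁻¹ * g) :=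
    Finset.sum_nonneg fun g _ => mul_nonneg (hnn n g) (hnn n _)
  have : (∑ g ∈ s, ν n g * ν n (x⁻¹ * g)) ^ 2 ≤ ν (n + n) 1 ^ 2 := by
    calc (∑ g ∈ s, ν n g * ν n (x⁻¹ * g)) ^ 2
        ≤ (∑ g ∈ s, ν n g ^ 2) * ∑ g ∈ s, ν n (x⁻¹ * g) ^ 2 := CS
      _ ≤ ν (n + n) 1 * ν (n + n) 1 := by
          apply mul_le_mul h1 h2 (Finset.sum_nonneg fun g _ => sq_nonneg _) hone_nn
      _ = ν (n + n) 1 ^ 2 := by ring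
  exact (pow_le_pow_iff_left₀ hsum_nn hone_nn two_ne_zero).mp this

/-- Supermultiplicativity of return probabilities at even times. -/
lemma nu_supermult (a b : ℕ) :
    ν a 1 * ν b 1 ≤ ν (a + b) 1 := by
  have hnn := nu_nonneg μ ν hnonneg hν0 hν
  rw [nu_conv μ ν hnonneg hsum hν0 hν a b 1]
  have hs : Summable fun h => ν a h * ν b (h⁻¹ * 1) := by
    have h0 : ∀ h : G, ν a h * ν b (h⁻¹ * 1) = ν a h * ν b h := by
      intro h; rw [mul_one, nu_symm μ ν hnonneg hsum hsym hν0 hν b h]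
    rw [funext h0]
    simpa using nu_mul_summable μ ν hnonneg hsum hν0 hν a b 1 1
  have := Summable.le_tsum hs 1 (fun h _ => mul_nonneg (hnn a h) (hnn b _))
  simpa using this

end KestenAux2
section KestenOp

open scoped RealInnerProductSpace ENNReal

variable {G : Type*} [Group G] [DecidableEq G]
variable (μ : G → ℝ) (ν : ℕ → G → ℝ)
variable (hnonneg : ∀ g, 0 ≤ μ g) (hsum : ∑' g, μ g = 1) (hsym : ∀ g, μ g⁻¹ = μ g)
variable (hν0 : ∀ g : G, ν 0 g = if g = 1 then 1 else 0)
variable (hν : ∀ n (g : G), ν (n + 1) g = ∑' h : G, ν n h * μ (h⁻¹ * g))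
variable (M : lp (fun _ : G => ℝ) 2 →L[ℝ] lp (fun _ : G => ℝ) 2)
variable (hM : ∀ f : lp (fun _ : G => ℝ) 2, ∀ g : G,
      (M f : ∀ _ : G, ℝ) g = ∑' h : G, f h * μ (h⁻¹ * g))

lemma two_toReal : (2 : ℝ≥0∞).toReal = 2 := by norm_num

/-- Monotonicity of the `ℓ²` norm under pointwise domination. -/
lemma lp2_norm_le_of_abs_le (u w : lp (fun _ : G => ℝ) 2)
    (h : ∀ g, |u g| ≤ |w g|) : ‖u‖ ≤ ‖w‖ := by
  have hp : 0 < (2 : ℝ≥0∞).toReal := by rw [two_toReal]; norm_num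
  have h2 : ‖u‖ ^ (2 : ℝ≥0∞).toReal ≤ ‖w‖ ^ (2 : ℝ≥0∞).toReal := by
    rw [lp.norm_rpow_eq_tsum hp u, lp.norm_rpow_eq_tsum hp w]
    refine Summable.tsum_le_tsum (fun g => ?_) ((lp.hasSum_norm hp u).summable)
      ((lp.hasSum_norm hp w).summable)
    exact Real.rpow_le_rpow (norm_nonneg _) (by simpa [Real.norm_eq_abs] using h g) hp.le
  rw [two_toReal, show (2:ℝ) = ((2:ℕ):ℝ) by norm_num, Real.rpow_natCast, Real.rpow_natCast] at h2
  exact (pow_le_pow_iff_left₀ (norm_nonneg u) (norm_nonneg w) two_ne_zero).mp h2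

lemma lp_single_coe (k : G) (a : ℝ) (g : G) :
    (lp.single (E := fun _ : G => ℝ) 2 k a : ∀ _ : G, ℝ) g = if g = k then a else 0 := by
  by_cases h : g = k
  · rw [h, lp.single_apply_self, if_pos rfl]
  · rw [lp.single_apply_ne 2 k _ h, if_neg h]

include hν0 hν hM in
lemma Mpow_single (k : G) :
    ∀ n (g : G), ((M ^ n) (lp.single 2 k 1) : ∀ _ : G, ℝ) g = ν n (k⁻¹ * g) := by
  intro n
  induction n with
  | zero =>
    intro g
    rw [pow_zero, ContinuousLinearMap.one_apply, hν0]
    by_cases hg : g = k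
    · rw [hg, lp.single_apply_self, if_pos (inv_mul_cancel _)]
    · rw [lp.single_apply_ne 2 k _ hg, if_neg (fun hh => hg (inv_mul_eq_one.mp hh).symm)]
  | succ n ih =>
    intro g
    rw [pow_succ', ContinuousLinearMap.mul_apply, hM]
    have e := (Equiv.mulLeft k).tsum_eq
      (fun h => ((M ^ n) (lp.single 2 k 1) : ∀ _ : G, ℝ) h * μ (h⁻¹ * g))
    simp only [Equiv.coe_mulLeft] at e
    rw [← e, hν n (k⁻¹ * g)]
    apply tsum_congr
    intro y
    rw [ih (k * y), inv_mul_cancel_left, mul_inv_rev, mul_assoc]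

variable (c : G → ℝ) (s : Finset G)

include hν0 hν hM in
lemma Mpow_comb (n : ℕ) (g : G) :
    (((M ^ n) (∑ k ∈ s, lp.single 2 k (c k)) : lp (fun _ : G => ℝ) 2) : ∀ _ : G, ℝ) g
      = ∑ k ∈ s, c k * ν n (k⁻¹ * g) := by
  have h1 : ∀ k : G, lp.single (E := fun _ : G => ℝ) 2 k (c k) = c k • lp.single 2 k (1 : ℝ) := by
    intro k
    have := lp.single_smul (E := fun _ : G => ℝ) 2 k (c k) (1 : ℝ)
    rwa [smul_eq_mul, mul_one] at this
  simp only [h1, map_sum, map_smul]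
  rw [lp.coeFn_sum]
  rw [Finset.sum_apply]
  apply Finset.sum_congr rfl
  intro k _
  rw [lp.coeFn_smul, Pi.smul_apply, smul_eq_mul, Mpow_single μ ν hν0 hν M hM k n g]

include hnonneg hsum hsym hν0 hν hM in
lemma inner_Mpow (a b : ℕ) :
    ⟪(M ^ a) (∑ k ∈ s, lp.single 2 k (c k)), (M ^ b) (∑ k ∈ s, lp.single 2 k (c k))⟫
      = ∑ h ∈ s, ∑ k ∈ s, c h * c k * ν (a + b) (h⁻¹ * k) := by
  have hnn := nu_nonneg μ ν hnonneg hν0 hν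
  rw [lp.inner_eq_tsum]
  have hco : ∀ g : G, ⟪(((M ^ a) (∑ k ∈ s, lp.single 2 k (c k))) : ∀ _ : G, ℝ) g,
      (((M ^ b) (∑ k ∈ s, lp.single 2 k (c k))) : ∀ _ : G, ℝ) g⟫
      = ∑ h ∈ s, ∑ k ∈ s, (c h * c k) * (ν a (h⁻¹ * g) * ν b (k⁻¹ * g)) := by
    intro g
    rw [Mpow_comb μ ν hν0 hν M hM c s a g, Mpow_comb μ ν hν0 hν M hM c s b g]
    rw [RCLike.inner_apply, RCLike.conj_to_real, mul_comm (∑ k ∈ s, c k * ν b (k⁻¹ * g)), Finset.sum_mul_sum]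
    apply Finset.sum_congr rfl; intro h _; apply Finset.sum_congr rfl; intro k _; ring
  rw [tsum_congr hco]
  have hsumm : ∀ h ∈ s, ∀ k ∈ s,
      Summable fun g => (c h * c k) * (ν a (h⁻¹ * g) * ν b (k⁻¹ * g)) := fun h _ k _ =>
    (nu_mul_summable μ ν hnonneg hsum hν0 hν a b h⁻¹ k⁻¹).mul_left _
  rw [Summable.tsum_finsetSum (fun h hh => summable_sum fun k hk => hsumm h hh k hk)]
  apply Finset.sum_congr rfl
  intro h hh
  rw [Summable.tsum_finsetSum (fun k hk => hsumm h hh k hk)]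
  apply Finset.sum_congr rfl
  intro k hk
  rw [tsum_mul_left, nu_cross μ ν hnonneg hsum hsym hν0 hν a b h k]

include hnonneg hsum hsym hν0 hν hM in
lemma norm_Mpow_comb_sq (n : ℕ) :
    ‖(M ^ n) (∑ k ∈ s, lp.single 2 k (c k))‖ ^ 2
      = ∑ h ∈ s, ∑ k ∈ s, c h * c k * ν (n + n) (h⁻¹ * k) := by
  rw [← real_inner_self_eq_norm_sq]
  exact inner_Mpow μ ν hnonneg hsum hsym hν0 hν M hM c s n n

include hnonneg hsum hsym hν0 hν hM in
/-- Upper bound: return probabilities are dominated by powers of the operator norm. -/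
lemma nu_le_opNorm (n : ℕ) : ν (n + n) 1 ≤ ‖M‖ ^ (n + n) := by
  set δ : lp (fun _ : G => ℝ) 2 := lp.single 2 (1 : G) (1 : ℝ) with hδ
  have hδnorm : ‖δ‖ = 1 := by
    have := lp.norm_single (p := 2) (E := fun _ : G => ℝ)
      (by norm_num) (1 : G) (1 : ℝ)
    simpa [hδ] using this
  have hval : ν (n + n) 1 = ⟪(M ^ n) δ, (M ^ n) δ⟫ := by
    rw [lp.inner_eq_tsum]
    have : ∀ g : G, ⟪(((M ^ n) δ) : ∀ _ : G, ℝ) g, (((M ^ n) δ) : ∀ _ : G, ℝ) g⟫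
        = ν n ((1 : G)⁻¹ * g) * ν n ((1 : G)⁻¹ * g) := by
      intro g
      rw [RCLike.inner_apply, RCLike.conj_to_real, Mpow_single μ ν hν0 hν M hM 1 n g]
    rw [tsum_congr this, nu_self_cross μ ν hnonneg hsum hsym hν0 hν n 1]
  have hnorm : ∀ m : ℕ, ‖(M ^ m) δ‖ ≤ ‖M‖ ^ m := by
    intro m
    induction m with
    | zero => rw [pow_zero, ContinuousLinearMap.one_apply, hδnorm, pow_zero]
    | succ m ih =>
      rw [pow_succ', ContinuousLinearMap.mul_apply]
      calc ‖M ((M ^ m) δ)‖ ≤ ‖M‖ * ‖(M ^ m) δ‖ := M.le_opNorm _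
        _ ≤ ‖M‖ * ‖M‖ ^ m := by
            exact mul_le_mul_of_nonneg_left ih (norm_nonneg M)
        _ = ‖M‖ ^ (m + 1) := by ring
  rw [hval, real_inner_self_eq_norm_sq]
  calc ‖(M ^ n) δ‖ ^ 2 ≤ (‖M‖ ^ n) ^ 2 :=
        pow_le_pow_left₀ (norm_nonneg _) (hnorm n) 2
    _ = ‖M‖ ^ (n + n) := by ring

end KestenOp
open scoped RealInnerProductSpace ENNReal

theorem kesten_spectral_radius
    {G : Type*} [Group G] [Countable G] [DecidableEq G]
    (μ : G → ℝ)
    (hnonneg : ∀ g, 0 ≤ μ g)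
    (hsum : ∑' g, μ g = 1)
    (hsym : ∀ g, μ g⁻¹ = μ g)
    (hgen : Subgroup.closure {g | μ g ≠ 0} = ⊤)
    (M : lp (fun _ : G => ℝ) 2 →L[ℝ] lp (fun _ : G => ℝ) 2)
    (hM : ∀ f : lp (fun _ : G => ℝ) 2, ∀ g : G,
      (M f : ∀ _ : G, ℝ) g = ∑' h : G, f h * μ (h⁻¹ * g))
    (ν : ℕ → G → ℝ)
    (hν0 : ∀ g : G, ν 0 g = if g = 1 then 1 else 0)
    (hν : ∀ n (g : G), ν (n + 1) g = ∑' h : G, ν n h * μ (h⁻¹ * g)) :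
    Tendsto (fun n : ℕ => (ν (2 * n) 1) ^ (1 / (2 * n : ℝ))) atTop (𝓝 ‖M‖) := by
  classical
  have hnn := nu_nonneg μ ν hnonneg hν0 hν
  have hc0 : ν 0 1 = 1 := by rw [hν0]; simp
  have hsuper := nu_supermult μ ν hnonneg hsum hsym hν0 hν
  have hub : ∀ n, ν (n + n) 1 ≤ ‖M‖ ^ (n + n) :=
    nu_le_opNorm μ ν hnonneg hsum hsym hν0 hν M hM
  have hc2pos : 0 < ν 2 1 := by
    have hex : ∃ g : G, 0 < μ g := by
      by_contra hno
      push_neg at hno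
      have : ∀ g : G, μ g = 0 := fun g => le_antisymm (hno g) (hnonneg g)
      rw [tsum_congr this, tsum_zero] at hsum
      norm_num at hsum
    obtain ⟨g, hg⟩ := hex
    have h2 : (2 : ℕ) = 1 + 1 := by norm_num
    rw [h2, nu_conv μ ν hnonneg hsum hν0 hν 1 1 1]
    have hμ1 : ∀ x : G, ν 1 x = μ x := nu_one_eq_mu μ ν hnonneg hsum hν0 hν
    have hterm : ∀ h : G, ν 1 h * ν 1 (h⁻¹ * 1) = μ h * μ h := by
      intro h
      rw [hμ1, hμ1, mul_one, hsym h]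
    rw [tsum_congr hterm]
    have hs : Summable fun h : G => μ h * μ h := by
      refine Summable.of_nonneg_of_le (fun h => mul_nonneg (hnonneg h) (hnonneg h))
        (fun h => ?_) (mu_summable μ hsum)
      calc μ h * μ h ≤ 1 * μ h :=
            mul_le_mul_of_nonneg_right (mu_le_one μ hnonneg hsum h) (hnonneg h)
        _ = μ h := one_mul _
    exact Summable.tsum_pos hs (fun h => mul_nonneg (hnonneg h) (hnonneg h)) g (by positivity)
  have hpos : ∀ n, 0 < ν (2 * n) 1 := by
    intro n
    induction n with
    | zero => simpa using hc0 ▸ one_pos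
    | succ n ih =>
      have h1 : ν (2 * n) 1 * ν 2 1 ≤ ν (2 * n + 2) 1 := hsuper (2 * n) 2
      have h2 : 2 * (n + 1) = 2 * n + 2 := by ring
      rw [h2]
      exact lt_of_lt_of_le (mul_pos ih hc2pos) h1
  have hMpos : 0 < ‖M‖ := by
    have h := hub 1
    rw [show (1 + 1 : ℕ) = 2 from by norm_num] at h
    nlinarith [norm_nonneg M, hc2pos, h]
  -- Fekete's lemma setup
  set u : ℕ → ℝ := fun n => -Real.log (ν (2 * n) 1) with hu
  have hsub : Subadditive u := by
    intro m n
    have h1 := hsuper (2 * m) (2 * n)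
    have h2 : 2 * m + 2 * n = 2 * (m + n) := by ring
    rw [h2] at h1
    have h3 : Real.log (ν (2 * m) 1) + Real.log (ν (2 * n) 1)
        ≤ Real.log (ν (2 * (m + n)) 1) := by
      rw [← Real.log_mul (hpos m).ne' (hpos n).ne']
      exact Real.log_le_log (mul_pos (hpos m) (hpos n)) h1
    simp only [hu]
    linarith
  have hlogub : ∀ n : ℕ, Real.log (ν (2 * n) 1) ≤ (2 * n : ℕ) * Real.log ‖M‖ := by
    intro n
    have h := hub n
    rw [show n + n = 2 * n from by ring] at h
    calc Real.log (ν (2 * n) 1) ≤ Real.log (‖M‖ ^ (2 * n)) := Real.log_le_log (hpos n) h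
      _ = (2 * n : ℕ) * Real.log ‖M‖ := Real.log_pow _ _
  have hbdd : BddBelow (Set.range fun n : ℕ => u n / n) := by
    refine ⟨min 0 (-(2 * Real.log ‖M‖)), ?_⟩
    rintro x ⟨n, rfl⟩
    rcases Nat.eq_zero_or_pos n with rfl | hn
    · have h0 : u 0 = 0 := by
        have hx : ν (2 * 0) 1 = 1 := by rw [Nat.mul_zero, hc0]
        simp only [hu, hx, Real.log_one, neg_zero]
      calc min 0 (-(2 * Real.log ‖M‖)) ≤ 0 := min_le_left _ _
        _ = u 0 / ((0 : ℕ) : ℝ) := by rw [h0, zero_div]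
    · have hn' : (0 : ℝ) < n := by exact_mod_cast hn
      refine le_trans (min_le_right _ _) ?_
      rw [le_div_iff₀ hn']
      have := hlogub n
      simp only [hu]
      push_cast at this ⊢
      nlinarith
  have hlim : Tendsto (fun n : ℕ => u n / n) atTop (𝓝 hsub.lim) := hsub.tendsto_lim hbdd
  set L : ℝ := hsub.lim with hL
  set r : ℝ := Real.exp (-L / 2) with hr
  have hrpos : 0 < r := Real.exp_pos _
  have hcle : ∀ n : ℕ, ν (2 * n) 1 ≤ r ^ (2 * n) := by
    intro n
    rcases Nat.eq_zero_or_pos n with rfl | hn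
    · simp [hc0]
    · have hn' : (0 : ℝ) < n := by exact_mod_cast hn
      have h1 : L ≤ u n / n := hsub.lim_le_div hbdd hn.ne'
      have h2 : Real.log (ν (2 * n) 1) ≤ -L * n := by
        rw [le_div_iff₀ hn'] at h1
        simp only [hu] at h1
        nlinarith
      have h3 : ν (2 * n) 1 = Real.exp (Real.log (ν (2 * n) 1)) :=
        (Real.exp_log (hpos n)).symm
      have h4 : r ^ (2 * n) = Real.exp ((2 * n : ℕ) * (-L / 2)) := by
        rw [hr, ← Real.exp_nat_mul]
      rw [h3, h4]
      apply Real.exp_le_exp.mpr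
      push_cast
      nlinarith
  have hrleM : r ≤ ‖M‖ := by
    have hLlb : -(2 * Real.log ‖M‖) ≤ L := by
      refine ge_of_tendsto hlim ?_
      filter_upwards [eventually_ge_atTop 1] with n hn
      have hn' : (0 : ℝ) < n := by exact_mod_cast hn
      rw [le_div_iff₀ hn']
      have := hlogub n
      simp only [hu]
      push_cast at this ⊢
      nlinarith
    calc r = Real.exp (-L / 2) := hr
      _ ≤ Real.exp (Real.log ‖M‖) := by
          apply Real.exp_le_exp.mpr
          linarith
      _ = ‖M‖ := Real.exp_log hMpos
  have key : ∀ y : ℝ, 0 ≤ y → y < ‖M‖ → y ≤ r := by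
    intro y hy0 hyM
    obtain ⟨v, hv1, hvy⟩ : ∃ v : lp (fun _ : G => ℝ) 2, ‖v‖ ≤ 1 ∧ y < ‖M v‖ := by
      by_contra hcon
      push_neg at hcon
      have : ‖M‖ ≤ y := by
        refine M.opNorm_le_bound hy0 fun x => ?_
        rcases eq_or_ne x 0 with rfl | hx
        · simp
        · have hnx : 0 < ‖x‖ := norm_pos_iff.mpr hx
          have hunit : ‖(‖x‖⁻¹ • x : lp (fun _ : G => ℝ) 2)‖ ≤ 1 := by
            rw [norm_smul, norm_inv, norm_norm, inv_mul_cancel₀ hnx.ne']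
          have hc2 := hcon _ hunit
          rw [map_smul, norm_smul, norm_inv, norm_norm] at hc2
          rw [inv_mul_le_iff₀ hnx] at hc2
          linarith [hc2]
      exact absurd this (not_le.mpr hyM)
    obtain ⟨s, hs⟩ : ∃ s : Finset G, y < ‖M (∑ k ∈ s, lp.single 2 k (v k))‖ := by
      have h1 : HasSum (fun k : G => lp.single 2 k (v k)) v :=
        lp.hasSum_single (by norm_num) v
      have h2 : Tendsto (fun t : Finset G => ‖M (∑ k ∈ t, lp.single 2 k (v k))‖)
          atTop (𝓝 ‖M v‖) := ((M.continuous.tendsto v).comp h1).norm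
      exact (h2.eventually (eventually_gt_nhds hvy)).exists
    set cc : G → ℝ := fun k => |v k| with hcc
    set f : lp (fun _ : G => ℝ) 2 := ∑ k ∈ s, lp.single 2 k (cc k) with hf
    set f₀ : lp (fun _ : G => ℝ) 2 := ∑ k ∈ s, lp.single 2 k (v k) with hf₀
    have hfco : ∀ g : G, (f : ∀ _ : G, ℝ) g = if g ∈ s then cc g else 0 := by
      intro g
      rw [hf, lp.coeFn_sum, Finset.sum_apply]
      simp [lp_single_coe, Finset.sum_ite_eq]
    have hfnorm : ‖f‖ ≤ 1 := by
      refine le_trans (lp2_norm_le_of_abs_le f v ?_) hv1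
      intro g
      rw [hfco g]
      split_ifs with hg
      · rw [hcc]; simp
      · simp
    have hMf : y < ‖M f‖ := by
      refine lt_of_lt_of_le hs (lp2_norm_le_of_abs_le (M f₀) (M f) ?_)
      intro g
      have e₀ : (M f₀ : ∀ _ : G, ℝ) g = ∑ k ∈ s, v k * ν 1 (k⁻¹ * g) := by
        have := Mpow_comb μ ν hν0 hν M hM v s 1 g
        rwa [pow_one] at this
      have e₁ : (M f : ∀ _ : G, ℝ) g = ∑ k ∈ s, cc k * ν 1 (k⁻¹ * g) := by
        have := Mpow_comb μ ν hν0 hν M hM cc s 1 g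
        rwa [pow_one] at this
      rw [e₀, e₁]
      have h1 : |∑ k ∈ s, v k * ν 1 (k⁻¹ * g)| ≤ ∑ k ∈ s, cc k * ν 1 (k⁻¹ * g) := by
        refine le_trans (Finset.abs_sum_le_sum_abs _ _) ?_
        refine Finset.sum_le_sum fun k _ => ?_
        rw [abs_mul, abs_of_nonneg (hnn 1 _)]
      have h2 : (0 : ℝ) ≤ ∑ k ∈ s, cc k * ν 1 (k⁻¹ * g) :=
        Finset.sum_nonneg fun k _ => mul_nonneg (abs_nonneg _) (hnn 1 _)
      rw [abs_of_nonneg h2]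
      exact h1
    set B : ℕ → ℝ := fun m => ∑ h ∈ s, ∑ k ∈ s, cc h * cc k * ν m (h⁻¹ * k) with hB
    have hBnn : ∀ m, 0 ≤ B m := by
      intro m
      refine Finset.sum_nonneg fun h _ => Finset.sum_nonneg fun k _ => ?_
      exact mul_nonneg (mul_nonneg (abs_nonneg _) (abs_nonneg _)) (hnn m _)
    have hBinner : ∀ a b : ℕ, ⟪(M ^ a) f, (M ^ b) f⟫ = B (a + b) := fun a b =>
      inner_Mpow μ ν hnonneg hsum hsym hν0 hν M hM cc s a b
    have hBnorm : ∀ n : ℕ, ‖(M ^ n) f‖ ^ 2 = B (n + n) := fun n =>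
      norm_Mpow_comb_sq μ ν hnonneg hsum hsym hν0 hν M hM cc s n
    have hB2 : y ^ 2 < B 2 := by
      have hx : B 2 = ‖(M ^ 1) f‖ ^ 2 := (hBnorm 1).symm
      rw [hx, pow_one]
      exact pow_lt_pow_left₀ hMf hy0 two_ne_zero
    have hB2pos : 0 < B 2 := lt_of_le_of_lt (by positivity) hB2
    have hB0 : B 0 = ‖f‖ ^ 2 := by
      have h := hBnorm 0
      rw [pow_zero, ContinuousLinearMap.one_apply] at h
      exact h.symm
    have hB0le : B 0 ≤ 1 := by
      rw [hB0]
      exact pow_le_one₀ (norm_nonneg f) hfnorm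
    have hB0pos : 0 < B 0 := by
      rw [hB0]
      have hfne : f ≠ 0 := by
        intro h0
        rw [h0, map_zero, norm_zero] at hMf
        exact absurd hMf (not_lt.mpr hy0)
      have : 0 < ‖f‖ := norm_pos_iff.mpr hfne
      positivity
    have hCS : ∀ n : ℕ, B (n + 1 + (n + 1)) ^ 2 ≤ B (n + n) * B (n + 2 + (n + 2)) := by
      intro n
      have h1 : B (n + 1 + (n + 1)) = ⟪(M ^ (n + 2)) f, (M ^ n) f⟫ := by
        rw [hBinner (n + 2) n]
        congr 1
        ring
      have h2 : B (n + 1 + (n + 1)) ≤ ‖(M ^ (n + 2)) f‖ * ‖(M ^ n) f‖ := by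
        rw [h1]
        exact real_inner_le_norm _ _
      have h5 : B (n + 1 + (n + 1)) ^ 2 ≤ (‖(M ^ (n + 2)) f‖ * ‖(M ^ n) f‖) ^ 2 :=
        pow_le_pow_left₀ (hBnn _) h2 2
      calc B (n + 1 + (n + 1)) ^ 2 ≤ (‖(M ^ (n + 2)) f‖ * ‖(M ^ n) f‖) ^ 2 := h5
        _ = ‖(M ^ n) f‖ ^ 2 * ‖(M ^ (n + 2)) f‖ ^ 2 := by ring
        _ = B (n + n) * B (n + 2 + (n + 2)) := by rw [hBnorm n, hBnorm (n + 2)]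
    set Cs : ℝ := (∑ k ∈ s, cc k) ^ 2 with hCsdef
    have hCs0 : 0 ≤ Cs := sq_nonneg _
    have hBle : ∀ n : ℕ, B (n + n) ≤ Cs * ν (2 * n) 1 := by
      intro n
      have h1 : B (n + n) ≤ ∑ h ∈ s, ∑ k ∈ s, cc h * cc k * ν (n + n) 1 := by
        refine Finset.sum_le_sum fun h _ => Finset.sum_le_sum fun k _ => ?_
        exact mul_le_mul_of_nonneg_left (nu_apply_le μ ν hnonneg hsum hsym hν0 hν n _)
          (mul_nonneg (abs_nonneg _) (abs_nonneg _))
      have h2 : ∑ h ∈ s, ∑ k ∈ s, cc h * cc k * ν (n + n) 1 = Cs * ν (n + n) 1 := by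
        rw [hCsdef, sq, Finset.sum_mul_sum, Finset.sum_mul]
        exact Finset.sum_congr rfl fun h _ => by rw [Finset.sum_mul]
      rw [show 2 * n = n + n from by ring]
      rw [← h2]
      exact h1
    clear_value B
    have hQ : ∀ n : ℕ, 0 < B (n + n) ∧ B (n + n) * B 2 ≤ B (n + 1 + (n + 1)) * B 0 := by
      intro n
      induction n with
      | zero =>
        refine ⟨hB0pos, ?_⟩
        have hx : (0 + 1 + (0 + 1)) = 2 := by norm_num
        rw [hx]
        exact le_of_eq (mul_comm _ _)
      | succ n ih =>
        obtain ⟨hpos1, hineq⟩ := ih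
        have hpos2 : 0 < B (n + 1 + (n + 1)) := by
          rcases lt_or_ge 0 (B (n + 1 + (n + 1))) with h | h
          · exact h
          · exfalso
            have h1 : B (n + 1 + (n + 1)) * B 0 ≤ 0 :=
              mul_nonpos_iff.mpr (Or.inr ⟨h, hB0pos.le⟩)
            have h2 : 0 < B (n + n) * B 2 := mul_pos hpos1 hB2pos
            linarith [le_trans hineq h1]
        refine ⟨hpos2, ?_⟩
        have hcs := hCS n
        have e1 : B (n + 1 + (n + 1)) ^ 2 * B 2 ≤ (B (n + n) * B 2) * B (n + 2 + (n + 2)) := by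
          calc B (n + 1 + (n + 1)) ^ 2 * B 2
              ≤ B (n + n) * B (n + 2 + (n + 2)) * B 2 :=
                mul_le_mul_of_nonneg_right hcs hB2pos.le
            _ = (B (n + n) * B 2) * B (n + 2 + (n + 2)) := by ring
        have e2 : (B (n + n) * B 2) * B (n + 2 + (n + 2))
            ≤ (B (n + 1 + (n + 1)) * B 0) * B (n + 2 + (n + 2)) :=
          mul_le_mul_of_nonneg_right hineq (hBnn _)
        have e3 : B (n + 1 + (n + 1)) * (B (n + 1 + (n + 1)) * B 2)
            ≤ B (n + 1 + (n + 1)) * (B (n + 1 + 1 + (n + 1 + 1)) * B 0) := by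
          have hx : n + 1 + 1 + (n + 1 + 1) = n + 2 + (n + 2) := by ring
          rw [hx]
          calc B (n + 1 + (n + 1)) * (B (n + 1 + (n + 1)) * B 2)
              = B (n + 1 + (n + 1)) ^ 2 * B 2 := by ring
            _ ≤ (B (n + n) * B 2) * B (n + 2 + (n + 2)) := e1
            _ ≤ (B (n + 1 + (n + 1)) * B 0) * B (n + 2 + (n + 2)) := e2
            _ = B (n + 1 + (n + 1)) * (B (n + 2 + (n + 2)) * B 0) := by ring
        exact (mul_le_mul_iff_right₀ hpos2).mp e3
    have hgeom : ∀ n : ℕ, B 2 ^ n * B 0 ≤ B (n + n) * B 0 ^ n := by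
      intro n
      induction n with
      | zero => simp
      | succ n ih =>
        have hq := (hQ n).2
        have h1 : B (n + n) * B 2 * B 0 ^ n ≤ B (n + 1 + (n + 1)) * B 0 * B 0 ^ n :=
          mul_le_mul_of_nonneg_right hq (pow_nonneg hB0pos.le n)
        have h2 : B 2 ^ (n + 1) * B 0 = (B 2 ^ n * B 0) * B 2 := by ring
        have h3 : (B 2 ^ n * B 0) * B 2 ≤ (B (n + n) * B 0 ^ n) * B 2 :=
          mul_le_mul_of_nonneg_right ih hB2pos.le
        have goal_eq : B (n + 1 + (n + 1)) * B 0 ^ (n + 1)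
            = B (n + 1 + (n + 1)) * B 0 * B 0 ^ n := by ring
        rw [h2, goal_eq]
        calc (B 2 ^ n * B 0) * B 2 ≤ (B (n + n) * B 0 ^ n) * B 2 := h3
          _ = B (n + n) * B 2 * B 0 ^ n := by ring
          _ ≤ _ := h1
    have hchain : ∀ n : ℕ, B 2 ^ n * B 0 ≤ Cs * (r ^ 2) ^ n := by
      intro n
      have h1 := hgeom n
      have h2 : B (n + n) * B 0 ^ n ≤ B (n + n) := by
        have hx : B 0 ^ n ≤ 1 := pow_le_one₀ hB0pos.le hB0le
        calc B (n + n) * B 0 ^ n ≤ B (n + n) * 1 :=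
              mul_le_mul_of_nonneg_left hx (hBnn _)
          _ = B (n + n) := mul_one _
      have h3 := hBle n
      have h4 : ν (2 * n) 1 ≤ r ^ (2 * n) := hcle n
      have h5 : (r ^ 2) ^ n = r ^ (2 * n) := by rw [← pow_mul]
      rw [h5]
      calc B 2 ^ n * B 0 ≤ B (n + n) * B 0 ^ n := h1
        _ ≤ B (n + n) := h2
        _ ≤ Cs * ν (2 * n) 1 := h3
        _ ≤ Cs * r ^ (2 * n) := mul_le_mul_of_nonneg_left h4 hCs0
    have hB2le : B 2 ≤ r ^ 2 := by
      by_contra hgt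
      push_neg at hgt
      have ht : 1 < B 2 / r ^ 2 := (one_lt_div (by positivity)).mpr hgt
      have hbound : ∀ n : ℕ, (B 2 / r ^ 2) ^ n ≤ Cs / B 0 := by
        intro n
        rw [div_pow, div_le_div_iff₀ (by positivity) hB0pos]
        exact hchain n
      obtain ⟨n, hn⟩ :=
        ((tendsto_pow_atTop_atTop_of_one_lt ht).eventually_gt_atTop (Cs / B 0)).exists
      exact absurd (hbound n) (not_le.mpr hn)
    have hy2 : y ^ 2 < r ^ 2 := lt_of_lt_of_le hB2 hB2le
    exact le_of_lt ((pow_lt_pow_iff_left₀ hy0 hrpos.le two_ne_zero).mp hy2)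
  have hMler : ‖M‖ ≤ r := by
    by_contra hcon
    push_neg at hcon
    obtain ⟨y, hy1, hy2⟩ := exists_between hcon
    exact absurd (key y (le_of_lt (lt_of_le_of_lt hrpos.le hy1)) hy2) (not_le.mpr hy1)
  have hreq : r = ‖M‖ := le_antisymm hrleM hMler
  have htend : Tendsto (fun n : ℕ => Real.exp (-(u n / n) / 2)) atTop (𝓝 r) := by
    rw [hr]
    exact (Real.continuous_exp.tendsto (-L / 2)).comp ((hlim.neg).div_const 2)
  rw [← hreq]
  refine htend.congr' ?_
  filter_upwards [eventually_ge_atTop 1] with n hn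
  have hn' : (0 : ℝ) < n := by exact_mod_cast hn
  have hne : (n : ℝ) ≠ 0 := hn'.ne'
  have harg : -(u n / (n : ℝ)) / 2 = Real.log (ν (2 * n) 1) * (1 / (2 * (n : ℝ))) := by
    simp only [hu]
    rw [neg_div, neg_div, neg_div, neg_neg, div_div, mul_one_div, mul_comm (n : ℝ) 2]
  rw [Real.rpow_def_of_pos (hpos n), ← harg]
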